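/- Let k be a field of characteristic 0, A = k[c, t], a = c − t(t+1), and σ the k[c]-algebra automorphism of A with σ(t) = t − 1. Then the generalized Weyl algebra W_{a,σ} is isomorphic to the universal enveloping algebra U(sl₂) = k⟨E, F, H⟩/(HE − EH − 2E, HF − FH + 2F, EF − FE − H), via H ↦ 2t, E ↦ x, F ↦ y. -/
import Mathlib


noncomputable section

open FreeAlgebra

/-- Generators for the skew Laurent polynomial ring `A[x,x⁻¹;σ]`. -/
inductive SLgen (A : Type) : Type
  | incl : A → SLgen A
  | x : SLgen A
  | xinv : SLgen A

variable (k : Type) [Field k] (A : Type) [Ring A] [Algebra k A]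

/-- Relations for the skew Laurent polynomial ring `A[x,x⁻¹;σ]`. -/
inductive SLrel (σ : A ≃ₐ[k] A) : FreeAlgebra k (SLgen A) → FreeAlgebra k (SLgen A) → Prop
  | add (a b : A) : SLrel σ (ι k (SLgen.incl (a + b))) (ι k (SLgen.incl a) + ι k (SLgen.incl b))
  | mul (a b : A) : SLrel σ (ι k (SLgen.incl (a * b))) (ι k (SLgen.incl a) * ι k (SLgen.incl b))
  | alg (c : k) : SLrel σ (ι k (SLgen.incl (algebraMap k A c))) (algebraMap k _ c)
  | xxinv : SLrel σ (ι k SLgen.x * ι k SLgen.xinv) 1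
  | xinvx : SLrel σ (ι k SLgen.xinv * ι k SLgen.x) 1
  | skew (a : A) : SLrel σ (ι k SLgen.x * ι k (SLgen.incl a)) (ι k (SLgen.incl (σ a)) * ι k SLgen.x)

/-- The skew Laurent polynomial ring `A[x,x⁻¹;σ]`. -/
abbrev SkewLaurent (σ : A ≃ₐ[k] A) : Type := RingQuot (SLrel k A σ)

variable (σ : A ≃ₐ[k] A)

/-- The canonical inclusion `A → A[x,x⁻¹;σ]`. -/
def SkewLaurent.incl (a : A) : SkewLaurent k A σ :=
  RingQuot.mkAlgHom k (SLrel k A σ) (ι k (SLgen.incl a))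

/-- The invertible generator `x` of `A[x,x⁻¹;σ]`. -/
def SkewLaurent.X : SkewLaurent k A σ :=
  RingQuot.mkAlgHom k (SLrel k A σ) (ι k SLgen.x)

/-- The inverse `x⁻¹` of the generator of `A[x,x⁻¹;σ]`. -/
def SkewLaurent.Xinv : SkewLaurent k A σ :=
  RingQuot.mkAlgHom k (SLrel k A σ) (ι k SLgen.xinv)

/-- Generators for a generalized Weyl algebra. -/
inductive Wgen (A : Type) : Type
  | incl : A → Wgen A
  | x : Wgen A
  | y : Wgen A

/-- Relations for the generalized Weyl algebra `W_{a,σ}`. -/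
inductive Wrel (σ : A ≃ₐ[k] A) (a : A) :
    FreeAlgebra k (Wgen A) → FreeAlgebra k (Wgen A) → Prop
  | add (u v : A) : Wrel σ a (ι k (Wgen.incl (u + v))) (ι k (Wgen.incl u) + ι k (Wgen.incl v))
  | mul (u v : A) : Wrel σ a (ι k (Wgen.incl (u * v))) (ι k (Wgen.incl u) * ι k (Wgen.incl v))
  | alg (c : k) : Wrel σ a (ι k (Wgen.incl (algebraMap k A c))) (algebraMap k _ c)
  | yx : Wrel σ a (ι k Wgen.y * ι k Wgen.x) (ι k (Wgen.incl a))
  | xy : Wrel σ a (ι k Wgen.x * ι k Wgen.y) (ι k (Wgen.incl (σ a)))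
  | xu (u : A) : Wrel σ a (ι k Wgen.x * ι k (Wgen.incl u)) (ι k (Wgen.incl (σ u)) * ι k Wgen.x)
  | yu (u : A) : Wrel σ a (ι k Wgen.y * ι k (Wgen.incl (σ u))) (ι k (Wgen.incl u) * ι k Wgen.y)

/-- The generalized Weyl algebra `W_{a,σ}`. -/
abbrev GWA (a : A) : Type := RingQuot (Wrel k A σ a)

/-- The canonical inclusion `A → W_{a,σ}`. -/
def GWA.incl (a : A) (u : A) : GWA k A σ a :=
  RingQuot.mkAlgHom k (Wrel k A σ a) (ι k (Wgen.incl u))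

/-- The generator `x` of `W_{a,σ}`. -/
def GWA.X (a : A) : GWA k A σ a :=
  RingQuot.mkAlgHom k (Wrel k A σ a) (ι k Wgen.x)

/-- The generator `y` of `W_{a,σ}`. -/
def GWA.Y (a : A) : GWA k A σ a :=
  RingQuot.mkAlgHom k (Wrel k A σ a) (ι k Wgen.y)


/-- Relations of `U(sl₂)`: generators `0 = E`, `1 = F`, `2 = H` with
`HE - EH = 2E`, `HF - FH = -2F`, `EF - FE = H`. -/
inductive SL2Rel : FreeAlgebra k (Fin 3) → FreeAlgebra k (Fin 3) → Prop
  | he : SL2Rel (ι k (2 : Fin 3) * ι k (0 : Fin 3))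
      (ι k (0 : Fin 3) * ι k (2 : Fin 3) + 2 * ι k (0 : Fin 3))
  | hf : SL2Rel (ι k (2 : Fin 3) * ι k (1 : Fin 3))
      (ι k (1 : Fin 3) * ι k (2 : Fin 3) - 2 * ι k (1 : Fin 3))
  | ef : SL2Rel (ι k (0 : Fin 3) * ι k (1 : Fin 3))
      (ι k (1 : Fin 3) * ι k (0 : Fin 3) + ι k (2 : Fin 3))

/-- The universal enveloping algebra `U(sl₂)`. -/
abbrev Usl2 : Type := RingQuot (SL2Rel k)

/-- The generator `E` of `U(sl₂)`. -/
def Usl2.E : Usl2 k := RingQuot.mkAlgHom k (SL2Rel k) (ι k (0 : Fin 3))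
/-- The generator `F` of `U(sl₂)`. -/
def Usl2.F : Usl2 k := RingQuot.mkAlgHom k (SL2Rel k) (ι k (1 : Fin 3))
/-- The generator `H` of `U(sl₂)`. -/
def Usl2.H : Usl2 k := RingQuot.mkAlgHom k (SL2Rel k) (ι k (2 : Fin 3))

namespace GWAproof

section Generic
variable {k : Type} [Field k] {A : Type} [Ring A] [Algebra k A] (σ : A ≃ₐ[k] A) (a : A)

/-- The inclusion `A → W_{a,σ}` as an algebra homomorphism. -/
def inclHom : A →ₐ[k] GWA k A σ a where
  toFun := GWA.incl k A σ a
  map_one' := by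
    have := RingQuot.mkAlgHom_rel k (Wrel.alg (σ := σ) (a := a) (1 : k))
    simpa [GWA.incl] using this
  map_mul' u v := by
    have := RingQuot.mkAlgHom_rel k (Wrel.mul (σ := σ) (a := a) u v)
    simpa [GWA.incl] using this
  map_zero' := by
    have := RingQuot.mkAlgHom_rel k (Wrel.alg (σ := σ) (a := a) (0 : k))
    simpa [GWA.incl] using this
  map_add' u v := by
    have := RingQuot.mkAlgHom_rel k (Wrel.add (σ := σ) (a := a) u v)
    simpa [GWA.incl] using this
  commutes' c := by
    have := RingQuot.mkAlgHom_rel k (Wrel.alg (σ := σ) (a := a) c)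
    simpa [GWA.incl] using this

lemma inclHom_apply (u : A) : inclHom σ a u = GWA.incl k A σ a u := rfl

lemma gyx : GWA.Y k A σ a * GWA.X k A σ a = inclHom σ a a := by
  have := RingQuot.mkAlgHom_rel k (Wrel.yx (σ := σ) (a := a))
  simpa [GWA.incl, GWA.X, GWA.Y, inclHom_apply] using this

lemma gxy : GWA.X k A σ a * GWA.Y k A σ a = inclHom σ a (σ a) := by
  have := RingQuot.mkAlgHom_rel k (Wrel.xy (σ := σ) (a := a))
  simpa [GWA.incl, GWA.X, GWA.Y, inclHom_apply] using this

lemma gxu (u : A) :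
    GWA.X k A σ a * inclHom σ a u = inclHom σ a (σ u) * GWA.X k A σ a := by
  have := RingQuot.mkAlgHom_rel k (Wrel.xu (σ := σ) (a := a) u)
  simpa [GWA.incl, GWA.X, inclHom_apply] using this

lemma gyu (u : A) :
    GWA.Y k A σ a * inclHom σ a (σ u) = inclHom σ a u * GWA.Y k A σ a := by
  have := RingQuot.mkAlgHom_rel k (Wrel.yu (σ := σ) (a := a) u)
  simpa [GWA.incl, GWA.Y, inclHom_apply] using this

end Generic

section Usl2rel
variable {k : Type} [Field k]

local notation "E" => Usl2.E k
local notation "F" => Usl2.F k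
local notation "H" => Usl2.H k

lemma rel_he : H * E = E * H + 2 * E := by
  have := RingQuot.mkAlgHom_rel k (SL2Rel.he (k := k))
  simpa [Usl2.E, Usl2.H, map_ofNat] using this

lemma rel_hf : H * F = F * H - 2 * F := by
  have := RingQuot.mkAlgHom_rel k (SL2Rel.hf (k := k))
  simpa [Usl2.F, Usl2.H, map_ofNat] using this

lemma rel_ef : E * F = F * E + H := by
  have := RingQuot.mkAlgHom_rel k (SL2Rel.ef (k := k))
  simpa [Usl2.E, Usl2.F, Usl2.H] using this

end Usl2rel

section RingIdent
variable {k R : Type} [Field k] [CharZero k] [Ring R] [Algebra k R] (E F H : R)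

theorem eh' (rel1 : H * E = E * H + 2 * E) : E * H = H * E - (2:k) • E := by
  have h2 : (2:R) * E = (2:k) • E := by rw [Algebra.smul_def, map_ofNat]
  rw [eq_sub_iff_add_eq, ← h2, ← rel1]

theorem fh' (rel2 : H * F = F * H - 2 * F) : F * H = H * F + (2:k) • F := by
  have h2 : (2:R) * F = (2:k) • F := by rw [Algebra.smul_def, map_ofNat]
  rw [← h2, ← sub_eq_iff_eq_add, eq_comm]; exact rel2

theorem ecas (rel1 : H * E = E * H + 2 * E) (rel3 : E * F = F * E + H) :
    E * (F*E + (4⁻¹:k) • (H*H) + (2⁻¹:k) • H) = (F*E + (4⁻¹:k) • (H*H) + (2⁻¹:k) • H) * E := by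
  have eh := eh' (k := k) E H rel1
  have ehh : E * (H*H) = H*(H*E) - (4:k) • (H*E) + (4:k) • E := by
    rw [← mul_assoc, eh, sub_mul, smul_mul_assoc, mul_assoc, eh]
    simp only [mul_sub, mul_add, smul_sub, smul_add, mul_smul_comm, smul_mul_assoc, smul_smul]
    match_scalars <;> norm_num
  have efe : E * (F*E) = F*(E*E) + H*E := by
    rw [← mul_assoc, rel3, add_mul, mul_assoc]
  rw [mul_add, mul_add, add_mul, add_mul, mul_smul_comm, mul_smul_comm, smul_mul_assoc,
    smul_mul_assoc, efe, ehh, eh, mul_assoc H H E, mul_assoc F E E]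
  match_scalars <;> norm_num

theorem fcas (rel2 : H * F = F * H - 2 * F) (rel3 : E * F = F * E + H) :
    F * (F*E + (4⁻¹:k) • (H*H) + (2⁻¹:k) • H) = (F*E + (4⁻¹:k) • (H*H) + (2⁻¹:k) • H) * F := by
  have fh := fh' (k := k) F H rel2
  have fhh : F * (H*H) = H*(H*F) + (4:k) • (H*F) + (4:k) • F := by
    rw [← mul_assoc, fh, add_mul, smul_mul_assoc, mul_assoc, fh]
    simp only [mul_sub, mul_add, smul_sub, smul_add, mul_smul_comm, smul_mul_assoc, smul_smul]
    match_scalars <;> norm_num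
  have fef : (F*E) * F = F*(F*E) + H*F + (2:k) • F := by
    rw [mul_assoc, rel3, mul_add, fh, ← add_assoc]
  rw [mul_add, mul_add, add_mul, add_mul, mul_smul_comm, mul_smul_comm, smul_mul_assoc,
    smul_mul_assoc, fef, fhh, fh, mul_assoc H H F]
  match_scalars <;> norm_num

theorem hcas (rel1 : H * E = E * H + 2 * E) (rel2 : H * F = F * H - 2 * F) :
    H * (F*E + (4⁻¹:k) • (H*H) + (2⁻¹:k) • H) = (F*E + (4⁻¹:k) • (H*H) + (2⁻¹:k) • H) * H := by
  have h2e : (2:R) * E = (2:k) • E := by rw [Algebra.smul_def, map_ofNat]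
  have h2f : (2:R) * F = (2:k) • F := by rw [Algebra.smul_def, map_ofNat]
  have hfe : H * (F*E) = (F*E) * H := calc
    H * (F*E) = (F*H - (2:k)•F)*E := by rw [← mul_assoc, rel2, h2f]
    _ = F*(E*H + 2*E) - (2:k)•(F*E) := by
        rw [sub_mul, smul_mul_assoc, mul_assoc, rel1]
    _ = F*(E*H) + (2:k)•(F*E) - (2:k)•(F*E) := by
        rw [mul_add, h2e, mul_smul_comm]
    _ = (F*E)*H := by rw [mul_assoc]; abel
  rw [mul_add, mul_add, add_mul, add_mul, mul_smul_comm, mul_smul_comm, smul_mul_assoc,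
    smul_mul_assoc, hfe]
  simp [mul_assoc]

end RingIdent

end GWAproof
namespace GWAproof
section Phi
variable (k : Type) [Field k] [CharZero k]

local notation "E" => Usl2.E k
local notation "F" => Usl2.F k
local notation "H" => Usl2.H k

/-- The (quarter) Casimir element of `U(sl₂)`. -/
def Cas : Usl2 k := F * E + (4⁻¹:k) • (H*H) + (2⁻¹:k) • H

/-- Half of `H`. -/
def hH : Usl2 k := (2⁻¹:k) • H

lemma hH_Cas : hH k * Cas k = Cas k * hH k := by
  have hcc := hcas (k := k) E F H rel_he rel_hf
  unfold hH Cas; rw [smul_mul_assoc, mul_smul_comm, hcc]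

lemma comm_pair : ∀ u ∈ ({Cas k, hH k} : Set (Usl2 k)),
    ∀ v ∈ ({Cas k, hH k} : Set (Usl2 k)), u * v = v * u := by
  rintro u (rfl|rfl) v (rfl|rfl)
  · rfl
  · exact (hH_Cas k).symm
  · exact hH_Cas k
  · rfl

/-- The map `k[c,t] → U(sl₂)`, `c ↦ Cas`, `t ↦ H/2`. -/
def phi : MvPolynomial (Fin 2) k →ₐ[k] Usl2 k :=
  letI := Algebra.adjoinCommRingOfComm k (comm_pair k)
  ((Algebra.adjoin k ({Cas k, hH k} : Set (Usl2 k))).val).comp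
    (MvPolynomial.aeval
      ![⟨Cas k, Algebra.subset_adjoin (Set.mem_insert _ _)⟩,
        ⟨hH k, Algebra.subset_adjoin (Set.mem_insert_of_mem _ rfl)⟩])

lemma phi_X0 : phi k (MvPolynomial.X 0) = Cas k := by
  simp [phi]

lemma phi_X1 : phi k (MvPolynomial.X 1) = hH k := by
  simp [phi]

lemma phi_a : phi k (MvPolynomial.X 0 - MvPolynomial.X 1 * (MvPolynomial.X 1 + 1)) = F * E := by
  rw [map_sub, map_mul, map_add, map_one, phi_X0, phi_X1]
  unfold Cas hH
  rw [mul_add, mul_one, smul_mul_assoc, mul_smul_comm, smul_smul]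
  match_scalars <;> norm_num

variable (σ : MvPolynomial (Fin 2) k ≃ₐ[k] MvPolynomial (Fin 2) k)

lemma phi_sa (hc : σ (MvPolynomial.X 0) = MvPolynomial.X 0)
    (ht : σ (MvPolynomial.X 1) = MvPolynomial.X 1 - 1) :
    phi k (σ (MvPolynomial.X 0 - MvPolynomial.X 1 * (MvPolynomial.X 1 + 1))) = E * F := by
  rw [map_sub, map_mul, map_add, map_one, hc, ht, map_sub, map_mul, map_sub, map_add,
    map_sub, map_one, phi_X0, phi_X1, rel_ef, sub_add_cancel]
  unfold Cas hH
  rw [sub_mul, smul_mul_assoc, mul_smul_comm, smul_smul, one_mul]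
  match_scalars <;> norm_num

lemma e_phi (hc : σ (MvPolynomial.X 0) = MvPolynomial.X 0)
    (ht : σ (MvPolynomial.X 1) = MvPolynomial.X 1 - 1) (u : MvPolynomial (Fin 2) k) : E * phi k u = phi k (σ u) * E := by
  have exi : ∀ i : Fin 2, E * phi k (MvPolynomial.X i) = phi k (σ (MvPolynomial.X i)) * E := by
    intro i
    fin_cases i
    · show E * phi k (MvPolynomial.X 0) = phi k (σ (MvPolynomial.X 0)) * E
      rw [hc, phi_X0]
      exact ecas (k := k) E F H rel_he rel_ef
    · show E * phi k (MvPolynomial.X 1) = phi k (σ (MvPolynomial.X 1)) * E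
      rw [ht, map_sub, map_one, phi_X1]
      unfold hH
      rw [mul_smul_comm, eh' (k := k) E H rel_he, sub_mul, smul_mul_assoc, smul_sub, smul_smul, one_mul]
      match_scalars <;> norm_num
  induction u using MvPolynomial.induction_on with
  | C a =>
      rw [← MvPolynomial.algebraMap_eq, AlgEquiv.commutes, AlgHom.commutes]
      exact (Algebra.commutes (R := k) a _).symm
  | add p q hp hq => rw [map_add, map_add, mul_add, map_add, add_mul, hp, hq]
  | mul_X p i hp =>
      rw [map_mul, map_mul, map_mul, ← mul_assoc, hp, mul_assoc, exi, ← mul_assoc]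

lemma f_phi (hc : σ (MvPolynomial.X 0) = MvPolynomial.X 0)
    (ht : σ (MvPolynomial.X 1) = MvPolynomial.X 1 - 1) (u : MvPolynomial (Fin 2) k) : F * phi k (σ u) = phi k u * F := by
  have fxi : ∀ i : Fin 2, F * phi k (σ (MvPolynomial.X i)) = phi k (MvPolynomial.X i) * F := by
    intro i
    fin_cases i
    · show F * phi k (σ (MvPolynomial.X 0)) = phi k (MvPolynomial.X 0) * F
      rw [hc, phi_X0]
      exact fcas (k := k) E F H rel_hf rel_ef
    · show F * phi k (σ (MvPolynomial.X 1)) = phi k (MvPolynomial.X 1) * F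
      rw [ht, map_sub, map_one, phi_X1]
      unfold hH
      rw [mul_sub, mul_one, mul_smul_comm, fh' (k := k) F H rel_hf, smul_add, smul_smul,
        smul_mul_assoc]
      match_scalars <;> norm_num
  induction u using MvPolynomial.induction_on with
  | C a =>
      rw [← MvPolynomial.algebraMap_eq, AlgEquiv.commutes, AlgHom.commutes]
      exact (Algebra.commutes (R := k) a _).symm
  | add p q hp hq => rw [map_add, map_add, map_add, mul_add, add_mul, hp, hq]
  | mul_X p i hp =>
      rw [map_mul, map_mul, map_mul, ← mul_assoc, hp, mul_assoc, fxi, ← mul_assoc]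

end Phi
end GWAproof
namespace GWAproof
section Main
variable (k : Type) [Field k] [CharZero k]

/-- The element `a = c - t(t+1)` of `k[c,t]`. -/
abbrev a0 : MvPolynomial (Fin 2) k :=
  MvPolynomial.X 0 - MvPolynomial.X 1 * (MvPolynomial.X 1 + 1)

variable (σ : MvPolynomial (Fin 2) k ≃ₐ[k] MvPolynomial (Fin 2) k)

lemma sigma_a0 (hc : σ (MvPolynomial.X 0) = MvPolynomial.X 0)
    (ht : σ (MvPolynomial.X 1) = MvPolynomial.X 1 - 1) :
    σ (a0 k) = a0 k + (2:k) • MvPolynomial.X 1 := by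
  rw [map_sub, map_mul, map_add, map_one, hc, ht, Algebra.smul_def, map_ofNat]
  ring

lemma smul2X1 : (2:k) • (MvPolynomial.X 1 : MvPolynomial (Fin 2) k) = 2 * MvPolynomial.X 1 := by
  rw [Algebra.smul_def, map_ofNat]

/-- The algebra map `U(sl₂) → W_{a,σ}`. -/
def toGWA (hc : σ (MvPolynomial.X 0) = MvPolynomial.X 0)
    (ht : σ (MvPolynomial.X 1) = MvPolynomial.X 1 - 1) :
    Usl2 k →ₐ[k] GWA k (MvPolynomial (Fin 2) k) σ (a0 k) :=
  RingQuot.liftAlgHom k ⟨FreeAlgebra.lift k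
      ![GWA.X k _ σ (a0 k), GWA.Y k _ σ (a0 k),
        (2:k) • inclHom σ (a0 k) (MvPolynomial.X 1)], by
    intro x y h
    have h2x : (2 : GWA k (MvPolynomial (Fin 2) k) σ (a0 k)) * GWA.X k _ σ (a0 k)
        = (2:k) • GWA.X k _ σ (a0 k) := by rw [Algebra.smul_def, map_ofNat]
    have h2y : (2 : GWA k (MvPolynomial (Fin 2) k) σ (a0 k)) * GWA.Y k _ σ (a0 k)
        = (2:k) • GWA.Y k _ σ (a0 k) := by rw [Algebra.smul_def, map_ofNat]
    cases h with
    | he =>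
        simp only [map_mul, map_add, map_ofNat, FreeAlgebra.lift_ι_apply, Matrix.cons_val_zero,
          Matrix.cons_val_one, Matrix.head_cons, Matrix.cons_val_two, Matrix.tail_cons]
        have hx : GWA.X k _ σ (a0 k) * inclHom σ (a0 k) (MvPolynomial.X 1)
            = inclHom σ (a0 k) (MvPolynomial.X 1) * GWA.X k _ σ (a0 k)
              - GWA.X k _ σ (a0 k) := by
          rw [gxu σ (a0 k) (MvPolynomial.X 1), ht, map_sub, map_one, sub_mul, one_mul]
        rw [smul_mul_assoc, mul_smul_comm, hx, h2x, smul_sub]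
        abel
    | hf =>
        simp only [map_mul, map_sub, map_ofNat, FreeAlgebra.lift_ι_apply, Matrix.cons_val_zero,
          Matrix.cons_val_one, Matrix.head_cons, Matrix.cons_val_two, Matrix.tail_cons]
        have hy : GWA.Y k _ σ (a0 k) * inclHom σ (a0 k) (MvPolynomial.X 1)
            = inclHom σ (a0 k) (MvPolynomial.X 1) * GWA.Y k _ σ (a0 k)
              + GWA.Y k _ σ (a0 k) := by
          have hs : σ (MvPolynomial.X 1 + 1) = MvPolynomial.X 1 := by
            rw [map_add, map_one, ht]; ring
          have h := gyu σ (a0 k) (MvPolynomial.X 1 + 1)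
          rw [hs, map_add, map_one, add_mul, one_mul] at h
          exact h
        rw [smul_mul_assoc, mul_smul_comm, hy, h2y, smul_add]
        abel
    | ef =>
        simp only [map_mul, map_add, map_ofNat, FreeAlgebra.lift_ι_apply, Matrix.cons_val_zero,
          Matrix.cons_val_one, Matrix.head_cons, Matrix.cons_val_two, Matrix.tail_cons]
        rw [gxy, gyx, sigma_a0 k σ hc ht, map_add, map_smul]⟩

section sigma
variable (hc : σ (MvPolynomial.X 0) = MvPolynomial.X 0)
  (ht : σ (MvPolynomial.X 1) = MvPolynomial.X 1 - 1)

lemma toGWA_E : toGWA k σ hc ht (Usl2.E k) = GWA.X k _ σ (a0 k) := by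
  rw [Usl2.E, toGWA, RingQuot.liftAlgHom_mkAlgHom_apply, FreeAlgebra.lift_ι_apply]
  rfl

lemma toGWA_F : toGWA k σ hc ht (Usl2.F k) = GWA.Y k _ σ (a0 k) := by
  rw [Usl2.F, toGWA, RingQuot.liftAlgHom_mkAlgHom_apply, FreeAlgebra.lift_ι_apply]
  rfl

lemma toGWA_H :
    toGWA k σ hc ht (Usl2.H k) = (2:k) • inclHom σ (a0 k) (MvPolynomial.X 1) := by
  rw [Usl2.H, toGWA, RingQuot.liftAlgHom_mkAlgHom_apply, FreeAlgebra.lift_ι_apply]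
  rfl

end sigma

/-- Images of the generators of `W_{a,σ}` in `U(sl₂)`. -/
def psiGen : Wgen (MvPolynomial (Fin 2) k) → Usl2 k
  | .incl u => phi k u
  | .x => Usl2.E k
  | .y => Usl2.F k

@[simp] lemma psiGen_incl (u : MvPolynomial (Fin 2) k) : psiGen k (Wgen.incl u) = phi k u := rfl
@[simp] lemma psiGen_x : psiGen k Wgen.x = Usl2.E k := rfl
@[simp] lemma psiGen_y : psiGen k Wgen.y = Usl2.F k := rfl

/-- The algebra map `W_{a,σ} → U(sl₂)`. -/
def toU (hc : σ (MvPolynomial.X 0) = MvPolynomial.X 0)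
    (ht : σ (MvPolynomial.X 1) = MvPolynomial.X 1 - 1) :
    GWA k (MvPolynomial (Fin 2) k) σ (a0 k) →ₐ[k] Usl2 k :=
  RingQuot.liftAlgHom k ⟨FreeAlgebra.lift k (psiGen k), by
    intro x y h
    cases h with
    | add u v => simp [map_add]
    | mul u v => simp [map_mul]
    | alg c => simp [AlgHom.commutes]
    | yx => simpa using (phi_a k).symm
    | xy => simpa using (phi_sa k σ hc ht).symm
    | xu u => simpa using e_phi k σ hc ht u
    | yu u => simpa using f_phi k σ hc ht u⟩

section sigma2
variable (hc : σ (MvPolynomial.X 0) = MvPolynomial.X 0)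
  (ht : σ (MvPolynomial.X 1) = MvPolynomial.X 1 - 1)

lemma toU_incl (u : MvPolynomial (Fin 2) k) :
    toU k σ hc ht (inclHom σ (a0 k) u) = phi k u := by
  rw [inclHom_apply, GWA.incl, toU, RingQuot.liftAlgHom_mkAlgHom_apply, FreeAlgebra.lift_ι_apply]
  rfl

lemma toU_X : toU k σ hc ht (GWA.X k _ σ (a0 k)) = Usl2.E k := by
  rw [GWA.X, toU, RingQuot.liftAlgHom_mkAlgHom_apply, FreeAlgebra.lift_ι_apply]
  rfl

lemma toU_Y : toU k σ hc ht (GWA.Y k _ σ (a0 k)) = Usl2.F k := by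
  rw [GWA.Y, toU, RingQuot.liftAlgHom_mkAlgHom_apply, FreeAlgebra.lift_ι_apply]
  rfl

lemma phi_2X1 : phi k (2 * MvPolynomial.X 1) = Usl2.H k := by
  rw [map_mul, map_ofNat, phi_X1]
  unfold hH
  have h2 : (2 : Usl2 k) * Usl2.H k = (2:k) • Usl2.H k := by rw [Algebra.smul_def, map_ofNat]
  rw [mul_smul_comm, h2, smul_smul]
  norm_num

lemma toGWA_phi (u : MvPolynomial (Fin 2) k) :
    toGWA k σ hc ht (phi k u) = inclHom σ (a0 k) u := by
  have key : (toGWA k σ hc ht).comp (phi k) = inclHom σ (a0 k) := by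
    apply MvPolynomial.algHom_ext
    intro i
    fin_cases i
    · show toGWA k σ hc ht (phi k (MvPolynomial.X 0)) = inclHom σ (a0 k) (MvPolynomial.X 0)
      rw [phi_X0]
      unfold Cas
      rw [map_add, map_add, map_mul, map_smul, map_smul, map_mul, toGWA_E, toGWA_F, toGWA_H,
        gyx, smul_mul_assoc, mul_smul_comm, smul_smul, smul_smul, smul_smul]
      norm_num
      rw [mul_add, mul_one, ← map_mul]
      abel
    · show toGWA k σ hc ht (phi k (MvPolynomial.X 1)) = inclHom σ (a0 k) (MvPolynomial.X 1)
      rw [phi_X1]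
      unfold hH
      rw [map_smul, toGWA_H, smul_smul]
      norm_num
  exact AlgHom.congr_fun key u

end sigma2
end Main
end GWAproof
/-- For `A = k[c,t]`, `a = c - t(t+1)`, and the `k[c]`-algebra automorphism
`σ` with `σ(t) = t - 1`, the generalized Weyl algebra `W_{a,σ}` is isomorphic to `U(sl₂)`
via `H ↦ 2t`, `E ↦ x`, `F ↦ y` (so `c` corresponds to the Casimir element). -/
theorem gwa_equiv_usl2 [CharZero k]
    (σ : MvPolynomial (Fin 2) k ≃ₐ[k] MvPolynomial (Fin 2) k)
    (hc : σ (MvPolynomial.X 0) = MvPolynomial.X 0)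
    (ht : σ (MvPolynomial.X 1) = MvPolynomial.X 1 - 1) :
    ∃ e : Usl2 k ≃ₐ[k]
        GWA k (MvPolynomial (Fin 2) k) σ
          (MvPolynomial.X 0 - MvPolynomial.X 1 * (MvPolynomial.X 1 + 1)),
      e (Usl2.H k) = GWA.incl k (MvPolynomial (Fin 2) k) σ
          (MvPolynomial.X 0 - MvPolynomial.X 1 * (MvPolynomial.X 1 + 1))
          (2 * MvPolynomial.X 1) ∧
      e (Usl2.E k) = GWA.X k (MvPolynomial (Fin 2) k) σ
          (MvPolynomial.X 0 - MvPolynomial.X 1 * (MvPolynomial.X 1 + 1)) ∧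
      e (Usl2.F k) = GWA.Y k (MvPolynomial (Fin 2) k) σ
          (MvPolynomial.X 0 - MvPolynomial.X 1 * (MvPolynomial.X 1 + 1)) := by
  have h1 : (GWAproof.toU k σ hc ht).comp (GWAproof.toGWA k σ hc ht)
      = AlgHom.id k (Usl2 k) := by
    apply RingQuot.ringQuot_ext'
    apply FreeAlgebra.hom_ext
    funext i
    fin_cases i
    · show GWAproof.toU k σ hc ht (GWAproof.toGWA k σ hc ht (Usl2.E k)) = Usl2.E k
      rw [GWAproof.toGWA_E, GWAproof.toU_X]
    · show GWAproof.toU k σ hc ht (GWAproof.toGWA k σ hc ht (Usl2.F k)) = Usl2.F k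
      rw [GWAproof.toGWA_F, GWAproof.toU_Y]
    · show GWAproof.toU k σ hc ht (GWAproof.toGWA k σ hc ht (Usl2.H k)) = Usl2.H k
      rw [GWAproof.toGWA_H, map_smul, GWAproof.toU_incl, GWAproof.phi_X1]
      unfold GWAproof.hH
      rw [smul_smul]
      norm_num
  have h2 : (GWAproof.toGWA k σ hc ht).comp (GWAproof.toU k σ hc ht)
      = AlgHom.id k (GWA k (MvPolynomial (Fin 2) k) σ (GWAproof.a0 k)) := by
    apply RingQuot.ringQuot_ext'
    apply FreeAlgebra.hom_ext
    funext g
    cases g with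
    | incl u =>
        show GWAproof.toGWA k σ hc ht (GWAproof.toU k σ hc ht
            (GWAproof.inclHom σ (GWAproof.a0 k) u)) = GWAproof.inclHom σ (GWAproof.a0 k) u
        rw [GWAproof.toU_incl, GWAproof.toGWA_phi]
    | x =>
        show GWAproof.toGWA k σ hc ht (GWAproof.toU k σ hc ht
            (GWA.X k _ σ (GWAproof.a0 k))) = GWA.X k _ σ (GWAproof.a0 k)
        rw [GWAproof.toU_X, GWAproof.toGWA_E]
    | y =>
        show GWAproof.toGWA k σ hc ht (GWAproof.toU k σ hc ht
            (GWA.Y k _ σ (GWAproof.a0 k))) = GWA.Y k _ σ (GWAproof.a0 k)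
        rw [GWAproof.toU_Y, GWAproof.toGWA_F]
  refine ⟨AlgEquiv.ofAlgHom (GWAproof.toGWA k σ hc ht) (GWAproof.toU k σ hc ht) h2 h1,
    ?_, ?_, ?_⟩
  · show GWAproof.toGWA k σ hc ht (Usl2.H k)
      = GWA.incl k (MvPolynomial (Fin 2) k) σ (GWAproof.a0 k) (2 * MvPolynomial.X 1)
    rw [GWAproof.toGWA_H, ← GWAproof.inclHom_apply, ← GWAproof.smul2X1 k, map_smul]
  · show GWAproof.toGWA k σ hc ht (Usl2.E k) = GWA.X k (MvPolynomial (Fin 2) k) σ (GWAproof.a0 k)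
    rw [GWAproof.toGWA_E]
  · show GWAproof.toGWA k σ hc ht (Usl2.F k) = GWA.Y k (MvPolynomial (Fin 2) k) σ (GWAproof.a0 k)
    rw [GWAproof.toGWA_F]

end
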